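/- Let T be a bounded operator on a Hilbert space H, S a Fredholm isometry on H, and c ∈ ℂ \ {0} such that S* T S = c T. Then the essential resolvent set ρ_e(T) = {μ : T − μ Fredholm} satisfies c⁻¹ ρ_e(T) ⊆ ρ_e(T); equivalently, c · σ_e(T) ⊆ σ_e(T) where σ_e is the essential (Fredholm) spectrum. -/

import Mathlib

/-- An operator is Fredholm if it has closed range, finite-dimensional kernel
and finite-dimensional cokernel. -/
def IsFredholm {H : Type*} [NormedAddCommGroup H] [InnerProductSpace ℂ H]
    [CompleteSpace H] (T : H →L[ℂ] H) : Prop :=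
  IsClosed (LinearMap.range (T : H →ₗ[ℂ] H) : Set H) ∧
    FiniteDimensional ℂ (LinearMap.ker (T : H →ₗ[ℂ] H)) ∧
    FiniteDimensional ℂ (H ⧸ LinearMap.range (T : H →ₗ[ℂ] H))

section Aux

open ContinuousLinearMap

/-- A module is finite-dimensional if a submodule and the corresponding quotient are. -/
lemma fd_of_submodule_quotient {M : Type*} [AddCommGroup M] [Module ℂ M]
    (p : Submodule ℂ M) (hp : FiniteDimensional ℂ p)
    (hq : FiniteDimensional ℂ (M ⧸ p)) : FiniteDimensional ℂ M := by
  have hp' : Module.rank ℂ p < Cardinal.aleph0 := Module.rank_lt_aleph0_iff.mpr hp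
  have hq' : Module.rank ℂ (M ⧸ p) < Cardinal.aleph0 := Module.rank_lt_aleph0_iff.mpr hq
  have : Module.rank ℂ M < Cardinal.aleph0 := by
    rw [← Submodule.rank_quotient_add_rank p]
    exact Cardinal.add_lt_aleph0 hq' hp'
  exact Module.rank_lt_aleph0_iff.mp this

variable {H : Type*} [NormedAddCommGroup H] [InnerProductSpace ℂ H] [CompleteSpace H]

/-- An operator range of finite codimension is closed. -/
lemma isClosed_range_of_fd_coker (C : H →L[ℂ] H)
    (h : FiniteDimensional ℂ (H ⧸ LinearMap.range (C : H →ₗ[ℂ] H))) :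
    IsClosed (LinearMap.range (C : H →ₗ[ℂ] H) : Set H) := by
  obtain ⟨F, hF⟩ := Submodule.exists_isCompl (LinearMap.range (C : H →ₗ[ℂ] H))
  haveI : FiniteDimensional ℂ F :=
    (Submodule.quotientEquivOfIsCompl _ F hF).finiteDimensional
  let Φ : H × F →L[ℂ] H := C.comp (fst ℂ H F) + F.subtypeL.comp (snd ℂ H F)
  have hΦ : ∀ p : H × F, Φ p = C p.1 + (p.2 : H) := fun p => rfl
  have hsurj : Function.Surjective Φ := by
    intro y
    have hy : y ∈ LinearMap.range (C : H →ₗ[ℂ] H) ⊔ F := by rw [hF.sup_eq_top]; trivial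
    obtain ⟨a, ⟨x, rfl⟩, b, hb, rfl⟩ := Submodule.mem_sup.mp hy
    exact ⟨(x, ⟨b, hb⟩), rfl⟩
  have hpre : Φ ⁻¹' (LinearMap.range (C : H →ₗ[ℂ] H) : Set H) = {p : H × F | p.2 = 0} := by
    ext ⟨x, f⟩
    simp only [Set.mem_preimage, SetLike.mem_coe, Set.mem_setOf_eq, hΦ]
    constructor
    · intro hmem
      have hf : (f : H) ∈ LinearMap.range (C : H →ₗ[ℂ] H) := by
        have heq : (f : H) = (C x + (f : H)) - C x := by abel
        rw [heq]
        exact Submodule.sub_mem _ hmem (LinearMap.mem_range_self _ x)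
      have : (f : H) ∈ LinearMap.range (C : H →ₗ[ℂ] H) ⊓ F := ⟨hf, f.2⟩
      rw [hF.inf_eq_bot] at this
      exact Subtype.ext this
    · rintro rfl
      simpa using LinearMap.mem_range_self (C : H →ₗ[ℂ] H) x
  have hopen : IsOpenMap Φ := Φ.isOpenMap hsurj
  have hcl : IsClosed {p : H × F | p.2 = 0} :=
    isClosed_eq continuous_snd continuous_const
  rw [← isOpen_compl_iff]
  have h1 : IsOpen (Φ ⁻¹' (LinearMap.range (C : H →ₗ[ℂ] H) : Set H)ᶜ) := by
    rw [Set.preimage_compl, hpre]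
    exact hcl.isOpen_compl
  have h2 := hopen _ h1
  rwa [Set.image_preimage_eq _ hsurj] at h2

/-- The composition of Fredholm operators is Fredholm. -/
lemma IsFredholm.comp {A B : H →L[ℂ] H} (hA : _root_.IsFredholm A) (hB : _root_.IsFredholm B) :
    _root_.IsFredholm (A ∘L B) := by
  obtain ⟨-, hA1, hA2⟩ := hA
  obtain ⟨-, hB1, hB2⟩ := hB
  set K := LinearMap.ker ((A ∘L B : H →L[ℂ] H) : H →ₗ[ℂ] H) with hK
  -- the map sending x ∈ ker (A ∘ B) to B x ∈ ker A
  let f : K →ₗ[ℂ] LinearMap.ker (A : H →ₗ[ℂ] H) :=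
    LinearMap.codRestrict (LinearMap.ker (A : H →ₗ[ℂ] H)) ((B : H →ₗ[ℂ] H).comp K.subtype)
      (fun x => by
        have hx := x.2
        simp only [hK, LinearMap.mem_ker] at hx ⊢
        exact hx)
  have hkerf : FiniteDimensional ℂ (LinearMap.ker f) := by
    let ι : LinearMap.ker f →ₗ[ℂ] H := K.subtype.comp (LinearMap.ker f).subtype
    have hι : ∀ y : LinearMap.ker f, B ((y : K) : H) = 0 := by
      intro y
      have := y.2
      rw [LinearMap.mem_ker] at this
      exact congrArg Subtype.val this
    let g : LinearMap.ker f →ₗ[ℂ] LinearMap.ker (B : H →ₗ[ℂ] H) :=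
      LinearMap.codRestrict (LinearMap.ker (B : H →ₗ[ℂ] H)) ι (fun y => by
        rw [LinearMap.mem_ker]; exact hι y)
    have hginj : Function.Injective g := by
      intro a b hab
      have h2 : ((g a : LinearMap.ker (B : H →ₗ[ℂ] H)) : H) = ((g b : LinearMap.ker (B : H →ₗ[ℂ] H)) : H) :=
        congrArg Subtype.val hab
      exact Subtype.ext (Subtype.ext h2)
    exact FiniteDimensional.of_injective g hginj
  have hquot : FiniteDimensional ℂ (K ⧸ LinearMap.ker f) := by
    haveI : FiniteDimensional ℂ (LinearMap.range f) := inferInstance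
    exact (f.quotKerEquivRange.symm).finiteDimensional
  have hker : FiniteDimensional ℂ K := fd_of_submodule_quotient _ hkerf hquot
  -- cokernel
  set q := LinearMap.range ((A ∘L B : H →L[ℂ] H) : H →ₗ[ℂ] H) with hq
  have hle : q ≤ LinearMap.range (A : H →ₗ[ℂ] H) := by
    rintro y ⟨x, rfl⟩
    exact ⟨B x, rfl⟩
  set p : Submodule ℂ (H ⧸ q) := (LinearMap.range (A : H →ₗ[ℂ] H)).map q.mkQ with hp
  have hpfd : FiniteDimensional ℂ p := by
    have hcond : LinearMap.range (B : H →ₗ[ℂ] H) ≤ LinearMap.ker (q.mkQ.comp (A : H →ₗ[ℂ] H)) := by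
      rintro y ⟨x, rfl⟩
      rw [LinearMap.mem_ker]
      simp only [LinearMap.comp_apply, ContinuousLinearMap.coe_coe]
      rw [Submodule.mkQ_apply, Submodule.Quotient.mk_eq_zero]
      exact ⟨x, rfl⟩
    let g := (LinearMap.range (B : H →ₗ[ℂ] H)).liftQ (q.mkQ.comp (A : H →ₗ[ℂ] H)) hcond
    have hrg : LinearMap.range g = p := by
      rw [Submodule.range_liftQ, LinearMap.range_comp]
    rw [← hrg]
    infer_instance
  have hqfd : FiniteDimensional ℂ ((H ⧸ q) ⧸ p) :=
    (Submodule.quotientQuotientEquivQuotient q (LinearMap.range (A : H →ₗ[ℂ] H)) hle).symm.finiteDimensional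
  have hcoker : FiniteDimensional ℂ (H ⧸ q) := fd_of_submodule_quotient p hpfd hqfd
  exact ⟨isClosed_range_of_fd_coker _ hcoker, hker, hcoker⟩

/-- Scalar multiples of Fredholm operators are Fredholm. -/
lemma IsFredholm.smul {A : H →L[ℂ] H} (hA : _root_.IsFredholm A) {c : ℂ} (hc : c ≠ 0) :
    _root_.IsFredholm (c • A) := by
  obtain ⟨h1, h2, h3⟩ := hA
  have hker : LinearMap.ker ((c • A : H →L[ℂ] H) : H →ₗ[ℂ] H) = LinearMap.ker (A : H →ₗ[ℂ] H) := by
    ext x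
    simp [LinearMap.mem_ker, hc]
  have hrange : LinearMap.range ((c • A : H →L[ℂ] H) : H →ₗ[ℂ] H) = LinearMap.range (A : H →ₗ[ℂ] H) := by
    ext y
    simp only [LinearMap.mem_range, ContinuousLinearMap.smul_apply]
    constructor
    · rintro ⟨x, rfl⟩
      exact ⟨c • x, by simp⟩
    · rintro ⟨x, rfl⟩
      exact ⟨c⁻¹ • x, by simp [smul_smul, hc]⟩
  refine ⟨?_, ?_, ?_⟩
  · rw [hrange]; exact h1
  · rw [hker]; exact h2
  · rw [hrange]; exact h3

end Aux

open scoped ComplexInnerProductSpace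

/-- If `S` is a Fredholm isometry and `S* T S = c T` with `c ≠ 0`,
then `c⁻¹ ρ_e(T) ⊆ ρ_e(T)`, i.e. `c σ_e(T) ⊆ σ_e(T)`. -/
theorem essential_resolvent_rotation_invariance
    {H : Type*} [NormedAddCommGroup H] [InnerProductSpace ℂ H] [CompleteSpace H]
    (S T : H →L[ℂ] H)
    (hiso : ∀ x : H, ‖S x‖ = ‖x‖)
    (hSF : IsFredholm S)
    (c : ℂ) (hc : c ≠ 0)
    (hint : ContinuousLinearMap.adjoint S ∘L T ∘L S = c • T) :
    (∀ μ : ℂ, IsFredholm (T - μ • 1) → IsFredholm (T - (c⁻¹ * μ) • 1)) ∧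
      ∀ μ : ℂ, ¬ IsFredholm (T - μ • 1) → ¬ IsFredholm (T - (c * μ) • 1) := by
  classical
  -- `S* S = 1`
  have hinner : ∀ x y : H, (inner ℂ (S x) (S y) : ℂ) = inner ℂ x y :=
    (LinearMap.norm_map_iff_inner_map_map S).mp hiso
  have hSS : ContinuousLinearMap.adjoint S ∘L S = 1 := by
    ext x
    apply ext_inner_left ℂ
    intro v
    simp only [ContinuousLinearMap.comp_apply, ContinuousLinearMap.one_apply]
    rw [ContinuousLinearMap.adjoint_inner_right, hinner]
  -- `S*` is Fredholm
  have hSadj : IsFredholm (ContinuousLinearMap.adjoint S) := by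
    have hsurj : Function.Surjective (ContinuousLinearMap.adjoint S) := by
      intro y
      refine ⟨S y, ?_⟩
      have := congrArg (fun (U : H →L[ℂ] H) => U y) hSS
      simpa using this
    have hrange : LinearMap.range ((ContinuousLinearMap.adjoint S : H →L[ℂ] H) : H →ₗ[ℂ] H) = ⊤ :=
      LinearMap.range_eq_top.mpr (by exact hsurj)
    have hcoker : FiniteDimensional ℂ (H ⧸ LinearMap.range ((ContinuousLinearMap.adjoint S : H →L[ℂ] H) : H →ₗ[ℂ] H)) := by
      haveI : Subsingleton (H ⧸ LinearMap.range ((ContinuousLinearMap.adjoint S : H →L[ℂ] H) : H →ₗ[ℂ] H)) :=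
        Submodule.Quotient.subsingleton_iff.mpr hrange
      infer_instance
    have hkereq : LinearMap.ker ((ContinuousLinearMap.adjoint S : H →L[ℂ] H) : H →ₗ[ℂ] H) = (LinearMap.range (S : H →ₗ[ℂ] H))ᗮ := by
      ext x
      rw [LinearMap.mem_ker, ContinuousLinearMap.coe_coe, Submodule.mem_orthogonal]
      constructor
      · intro hx u hu
        obtain ⟨v, rfl⟩ := hu
        rw [ContinuousLinearMap.coe_coe]
        rw [← ContinuousLinearMap.adjoint_inner_right, hx, inner_zero_right]
      · intro hx
        apply ext_inner_right ℂ
        intro v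
        rw [ContinuousLinearMap.adjoint_inner_left, inner_zero_left]
        have := hx (S v) ⟨v, rfl⟩
        rw [← inner_conj_symm] at this
        simpa using congrArg (starRingEnd ℂ) this
    have hker : FiniteDimensional ℂ (LinearMap.ker ((ContinuousLinearMap.adjoint S : H →L[ℂ] H) : H →ₗ[ℂ] H)) := by
      rw [hkereq]
      haveI : CompleteSpace (LinearMap.range (S : H →ₗ[ℂ] H)) := hSF.1.completeSpace_coe
      have hcompl : IsCompl (LinearMap.range (S : H →ₗ[ℂ] H)) (LinearMap.range (S : H →ₗ[ℂ] H))ᗮ :=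
        Submodule.isCompl_orthogonal_of_hasOrthogonalProjection
      haveI := hSF.2.2
      exact (Submodule.quotientEquivOfIsCompl _ _ hcompl).finiteDimensional
    exact ⟨by rw [hrange, Submodule.top_coe]; exact isClosed_univ, hker, hcoker⟩
  -- key step
  have key : ∀ μ : ℂ, IsFredholm (T - μ • 1) → IsFredholm (T - (c⁻¹ * μ) • 1) := by
    intro μ hμ
    have hcomp : ContinuousLinearMap.adjoint S ∘L (T - μ • 1) ∘L S
        = c • (T - (c⁻¹ * μ) • 1) := by
      have : (T - μ • 1) ∘L S = T ∘L S - μ • S := by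
        ext x; simp [ContinuousLinearMap.sub_apply]
      rw [this]
      rw [ContinuousLinearMap.comp_sub]
      have h1 : ContinuousLinearMap.adjoint S ∘L (T ∘L S) = c • T := by
        rw [← ContinuousLinearMap.comp_assoc] at hint ⊢
        exact hint
      have h2 : ContinuousLinearMap.adjoint S ∘L (μ • S) = μ • (1 : H →L[ℂ] H) := by
        rw [ContinuousLinearMap.comp_smul, hSS]
      rw [h1, h2, smul_sub, smul_smul]
      congr 1
      rw [mul_inv_cancel_left₀ hc]
    have hF : IsFredholm (c • (T - (c⁻¹ * μ) • 1)) := by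
      rw [← hcomp]
      exact (hSadj.comp hμ).comp hSF
    have := hF.smul (inv_ne_zero hc)
    rwa [smul_smul, inv_mul_cancel₀ hc, one_smul] at this
  refine ⟨key, ?_⟩
  intro μ hμ hcontra
  apply hμ
  have := key (c * μ) hcontra
  rwa [inv_mul_cancel_left₀ hc] at this
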